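/- Let Y be a real normed space and f: ℓ∞(Γ) → Y a surjective phase-isometry. Then f is phase-equivalent to a linear isometry: there exists ε: ℓ∞(Γ) → {−1, 1} such that ε·f is a surjective linear isometry. -/

import Mathlib

open Filter Topology

namespace Stmt15

variable {Γ : Type*} [Nonempty Γ] [DecidableEq Γ]

set_option synthInstance.maxHeartbeats 1000000

local notation "X" => lp (fun _ : Γ => ℝ) ⊤

lemma coord_abs_le (x : X) (γ : Γ) : |x γ| ≤ ‖x‖ :=
  lp.norm_apply_le_norm ENNReal.top_ne_zero x γ

lemma norm_le' {C : ℝ} (hC : 0 ≤ C) (x : X) (h : ∀ γ, |x γ| ≤ C) : ‖x‖ ≤ C :=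
  lp.norm_le_of_forall_le hC h

/-- the constant-one element of ℓ∞ -/
def allOne : X := ⟨(1 : ∀ _ : Γ, ℝ), one_memℓp_infty⟩

@[simp] lemma allOne_apply (γ : Γ) : (allOne : X) γ = 1 := rfl

lemma norm_allOne : ‖(allOne : X)‖ = 1 := by
  refine le_antisymm (norm_le' zero_le_one _ (fun γ => by rw [allOne_apply, abs_one])) ?_
  have := coord_abs_le (allOne : X) (Classical.arbitrary Γ)
  rw [allOne_apply, abs_one] at this
  exact this

lemma single_coord (γ : Γ) (t : ℝ) (β : Γ) :
    (lp.single ⊤ γ t : X) β = if β = γ then t else 0 := by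
  by_cases h : β = γ
  · subst h; simp [lp.single_apply_self]
  · simp [lp.single_apply_ne ⊤ γ _ h, h]

lemma norm_single (γ : Γ) (t : ℝ) : ‖(lp.single ⊤ γ t : X)‖ = |t| := by
  refine le_antisymm (norm_le' (abs_nonneg t) _ (fun β => ?_)) ?_
  · rw [single_coord]; split
    · exact le_refl _
    · rw [abs_zero]; exact abs_nonneg t
  · have := coord_abs_le (lp.single ⊤ γ t : X) γ
    simpa [single_coord] using this

lemma norm_add_single (x : X) (γ : Γ) {t : ℝ} (ht : 2 * ‖x‖ ≤ t) :
    ‖x + lp.single ⊤ γ t‖ = t + x γ := by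
  have hxγ := coord_abs_le x γ
  have h0 : (0:ℝ) ≤ ‖x‖ := norm_nonneg x
  have habs : |x γ| ≤ ‖x‖ := hxγ
  have h1 : |x γ + t| = t + x γ := by
    rw [abs_of_nonneg]; · ring
    · have := abs_le.mp habs; linarith
  refine le_antisymm (norm_le' ?_ _ (fun β => ?_)) ?_
  · have := abs_le.mp habs; linarith
  · have hc : (x + lp.single ⊤ γ t : X) β = x β + (if β = γ then t else 0) := by
      rw [← single_coord γ t β]
      exact congr_fun (lp.coeFn_add x (lp.single ⊤ γ t)) β
    by_cases h : β = γ
    · subst h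
      rw [hc, if_pos rfl, h1]
    · rw [hc, if_neg h, add_zero]
      have h2 := abs_le.mp (coord_abs_le x β)
      have h3 := abs_le.mp habs
      rw [abs_le]; constructor <;> linarith
  · have hc : (x + lp.single ⊤ γ t : X) γ = x γ + t := by
      have := congr_fun (lp.coeFn_add x (lp.single ⊤ γ t)) γ
      simp only [Pi.add_apply] at this
      rw [this, single_coord, if_pos rfl]
    have := coord_abs_le (x + lp.single ⊤ γ t : X) γ
    rw [hc] at this
    calc t + x γ = |x γ + t| := by rw [h1]
    _ ≤ _ := this

lemma norm_sub_single (x : X) (γ : Γ) {t : ℝ} (ht : 2 * ‖x‖ ≤ t) :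
    ‖x - lp.single ⊤ γ t‖ = t - x γ := by
  have h : x - lp.single ⊤ γ t = -((-x) + lp.single ⊤ γ t) := by abel
  rw [h, norm_neg, norm_add_single (-x) γ (by rwa [norm_neg])]
  have : (-x : X) γ = -(x γ) := congr_fun (lp.coeFn_neg x) γ
  rw [this]; ring



lemma seg {a s t u : ℝ} (ha : a ≠ 0) (hs : s = if 0 < a then 1 else -1)
    (ht0 : 0 ≤ t) (ht1 : t ≤ 1) (hu0 : 0 ≤ u) (hu1 : u ≤ 1) :
    2 * min |a| 1 ≤ |(a + t * (s - a)) + (a + u * (s - a))| := by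
  have hm2 : min |a| 1 ≤ 1 := min_le_right _ _
  have hmin0 : 0 ≤ min |a| 1 := le_min (abs_nonneg a) zero_le_one
  rcases ha.lt_or_gt with h | h
  · rw [if_neg (not_lt.mpr h.le)] at hs
    subst hs
    have hm1 : min |a| 1 ≤ -a := by
      rw [abs_of_neg h]; exact min_le_left _ _
    have h1 : a + t * (-1 - a) ≤ -(min |a| 1) := by nlinarith
    have h2 : a + u * (-1 - a) ≤ -(min |a| 1) := by nlinarith
    calc 2 * min |a| 1 ≤ -((a + t * (-1 - a)) + (a + u * (-1 - a))) := by linarith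
    _ ≤ |(a + t * (-1 - a)) + (a + u * (-1 - a))| := neg_le_abs _
  · rw [if_pos h] at hs
    subst hs
    have hm1 : min |a| 1 ≤ a := by
      rw [abs_of_pos h]; exact min_le_left _ _
    have h1 : min |a| 1 ≤ a + t * (1 - a) := by nlinarith
    have h2 : min |a| 1 ≤ a + u * (1 - a) := by nlinarith
    calc 2 * min |a| 1 ≤ (a + t * (1 - a)) + (a + u * (1 - a)) := by linarith
    _ ≤ |(a + t * (1 - a)) + (a + u * (1 - a))| := le_abs_self _

section Coherence

variable (P : lp (fun _ : Γ => ℝ) ⊤ → lp (fun _ : Γ => ℝ) ⊤)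
  (Pabs : ∀ (x : lp (fun _ : Γ => ℝ) ⊤) (γ : Γ), |P x γ| = |x γ|)
  (Ppair : ∀ x y : lp (fun _ : Γ => ℝ) ⊤, ({‖P x + P y‖, ‖P x - P y‖} : Set ℝ) = {‖x + y‖, ‖x - y‖})

include Pabs Ppair in
lemma step (x z : X) (γ δ : Γ)
    (hγ : P x γ = x γ) (hδ : P x δ = - x δ)
    (h1 : ‖x - z‖ < |x γ + z γ|) (h2 : ‖x - z‖ < |x δ + z δ|) :
    (P z γ = z γ ∧ P z δ = - z δ) ∨ (P z γ = - z γ ∧ P z δ = z δ) := by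
  have hpair := Ppair x z
  rw [Set.pair_eq_pair_iff] at hpair
  have habsγ : P z γ = z γ ∨ P z γ = - z γ := abs_eq_abs.mp (Pabs z γ)
  have habsδ : P z δ = z δ ∨ P z δ = - z δ := abs_eq_abs.mp (Pabs z δ)
  rcases hpair with ⟨hp1, hp2⟩ | ⟨hp1, hp2⟩
  · left
    have hb : ∀ β, |P x β - P z β| ≤ ‖x - z‖ := by
      intro β
      have h := coord_abs_le (P x - P z) β
      rw [hp2] at h
      rwa [show (P x - P z) β = P x β - P z β from congr_fun (lp.coeFn_sub (P x) (P z)) β] at h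
    constructor
    · rcases habsγ with h | h
      · exact h
      · exfalso
        have := hb γ
        rw [hγ, h, sub_neg_eq_add] at this
        linarith
    · rcases habsδ with h | h
      · exfalso
        have := hb δ
        rw [hδ, h, show - x δ - z δ = -(x δ + z δ) by ring, abs_neg] at this
        linarith
      · exact h
  · right
    have hb : ∀ β, |P x β + P z β| ≤ ‖x - z‖ := by
      intro β
      have h := coord_abs_le (P x + P z) β
      rw [hp1] at h
      rwa [show (P x + P z) β = P x β + P z β from congr_fun (lp.coeFn_add (P x) (P z)) β] at h
    constructor
    · rcases habsγ with h | h
      · exfalso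
        have := hb γ
        rw [hγ, h] at this
        linarith
      · exact h
    · rcases habsδ with h | h
      · exact h
      · exfalso
        have := hb δ
        rw [hδ, h, show - x δ + - z δ = -(x δ + z δ) by ring, abs_neg] at this
        linarith

lemma forall_bound (u : X) (γ δ : Γ) (C : ℝ) (h1 : |u γ| ≤ C) (h2 : |u δ| ≤ C)
    (h3 : ∀ β, β ≠ γ → β ≠ δ → |u β| ≤ C) : ∀ β, |u β| ≤ C := fun β => by
  by_cases hβγ : β = γ
  · exact hβγ ▸ h1
  · by_cases hβδ : β = δ
    · exact hβδ ▸ h2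
    · exact h3 β hβγ hβδ

lemma norm_eq_two (u : X) (β₀ : Γ) (h0 : |u β₀| = 2) (h : ∀ β, |u β| ≤ 2) : ‖u‖ = 2 :=
  le_antisymm (norm_le' (by norm_num) u h) (h0 ▸ coord_abs_le u β₀)


lemma addOne_coord (u : X) (β : Γ) : (u + allOne : X) β = u β + 1 := by
  have := congr_fun (lp.coeFn_add u (allOne : X)) β
  simpa using this

lemma subOne_coord (u : X) (β : Γ) : (u - allOne : X) β = u β - 1 := by
  have := congr_fun (lp.coeFn_sub u (allOne : X)) β
  simpa using this

include Pabs Ppair in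
lemma final (Pone : P allOne = allOne) (γ δ : Γ) (hne : γ ≠ δ) (s₁ s₂ : ℝ)
    (hs₁ : s₁ = 1 ∨ s₁ = -1) (hs₂ : s₂ = 1 ∨ s₂ = -1)
    (hPγ : P (lp.single ⊤ γ s₁ + lp.single ⊤ δ s₂) γ
      = (lp.single ⊤ γ s₁ + lp.single ⊤ δ s₂ : X) γ)
    (hPδ : P (lp.single ⊤ γ s₁ + lp.single ⊤ δ s₂) δ
      = - (lp.single ⊤ γ s₁ + lp.single ⊤ δ s₂ : X) δ) : False := by
  set v : X := lp.single ⊤ γ s₁ + lp.single ⊤ δ s₂ with hv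
  have vcoord : ∀ β, v β = (if β = γ then s₁ else 0) + (if β = δ then s₂ else 0) := by
    intro β
    have := congr_fun (lp.coeFn_add (lp.single ⊤ γ s₁ : X) (lp.single ⊤ δ s₂ : X)) β
    simp only [Pi.add_apply] at this
    rw [hv, this, single_coord, single_coord]
  have vγ : v γ = s₁ := by rw [vcoord]; simp [hne]
  have vδ : v δ = s₂ := by rw [vcoord]; simp [Ne.symm hne]
  have vother : ∀ β, β ≠ γ → β ≠ δ → v β = 0 := by
    intro β h1 h2; rw [vcoord]; simp [h1, h2]
  set w : X := P v with hw
  have wγ : w γ = s₁ := by rw [hw, hPγ, vγ]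
  have wδ : w δ = - s₂ := by rw [hw, hPδ, vδ]
  have wother : ∀ β, β ≠ γ → β ≠ δ → w β = 0 := by
    intro β h1 h2
    have := Pabs v β
    rw [vother β h1 h2, abs_zero, abs_eq_zero] at this
    exact this
  have hpair := Ppair v allOne
  rw [Pone] at hpair
  have hs₁2 : |s₁| ≤ 2 := by rcases hs₁ with h | h <;> rw [h] <;> norm_num
  have hs₂2 : |s₂| ≤ 2 := by rcases hs₂ with h | h <;> rw [h] <;> norm_num
  -- generic memberships
  have hmem1 : ‖v + allOne‖ ∈ ({‖w + allOne‖, ‖w - allOne‖} : Set ℝ) := by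
    rw [hpair]; left; rfl
  have hmem2 : ‖v - allOne‖ ∈ ({‖w + allOne‖, ‖w - allOne‖} : Set ℝ) := by
    rw [hpair]; right; rfl
  have hmem3 : ‖w + allOne‖ ∈ ({‖v + allOne‖, ‖v - allOne‖} : Set ℝ) := by
    rw [← hpair]; left; rfl
  rcases hs₁ with h1 | h1 <;> rcases hs₂ with h2 | h2
  · -- s₁ = 1, s₂ = 1 : ‖v - allOne‖ ≤ 1, ‖w ± allOne‖ = 2
    have hwp : ‖w + allOne‖ = 2 := by
      refine norm_eq_two _ γ (by rw [addOne_coord, wγ, h1]; norm_num) ?_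
      refine forall_bound _ γ δ 2 (by rw [addOne_coord, wγ, h1]; norm_num)
        (by rw [addOne_coord, wδ, h2]; norm_num) ?_
      intro β hβ1 hβ2
      rw [addOne_coord, wother β hβ1 hβ2]; norm_num
    have hwm : ‖w - allOne‖ = 2 := by
      refine norm_eq_two _ δ (by rw [subOne_coord, wδ, h2]; norm_num) ?_
      refine forall_bound _ γ δ 2 (by rw [subOne_coord, wγ, h1]; norm_num)
        (by rw [subOne_coord, wδ, h2]; norm_num) ?_
      intro β hβ1 hβ2
      rw [subOne_coord, wother β hβ1 hβ2]; norm_num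
    have hvm : ‖v - allOne‖ ≤ 1 := by
      refine norm_le' zero_le_one _ ?_
      refine forall_bound _ γ δ 1 (by rw [subOne_coord, vγ, h1]; norm_num)
        (by rw [subOne_coord, vδ, h2]; norm_num) ?_
      intro β hβ1 hβ2
      rw [subOne_coord, vother β hβ1 hβ2]; norm_num
    rcases hmem2 with h | h <;> rw [h] at hvm <;> [rw [hwp] at hvm; rw [hwm] at hvm] <;> linarith
  · -- s₁ = 1, s₂ = -1 : ‖w - allOne‖ ≤ 1, ‖v ± allOne‖ = 2
    have hvp : ‖v + allOne‖ = 2 := by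
      refine norm_eq_two _ γ (by rw [addOne_coord, vγ, h1]; norm_num) ?_
      refine forall_bound _ γ δ 2 (by rw [addOne_coord, vγ, h1]; norm_num)
        (by rw [addOne_coord, vδ, h2]; norm_num) ?_
      intro β hβ1 hβ2
      rw [addOne_coord, vother β hβ1 hβ2]; norm_num
    have hvm : ‖v - allOne‖ = 2 := by
      refine norm_eq_two _ δ (by rw [subOne_coord, vδ, h2]; norm_num) ?_
      refine forall_bound _ γ δ 2 (by rw [subOne_coord, vγ, h1]; norm_num)
        (by rw [subOne_coord, vδ, h2]; norm_num) ?_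
      intro β hβ1 hβ2
      rw [subOne_coord, vother β hβ1 hβ2]; norm_num
    have hwm : ‖w - allOne‖ ≤ 1 := by
      refine norm_le' zero_le_one _ ?_
      refine forall_bound _ γ δ 1 (by rw [subOne_coord, wγ, h1]; norm_num)
        (by rw [subOne_coord, wδ, h2]; norm_num) ?_
      intro β hβ1 hβ2
      rw [subOne_coord, wother β hβ1 hβ2]; norm_num
    have : ‖w - allOne‖ ∈ ({‖v + allOne‖, ‖v - allOne‖} : Set ℝ) := by
      rw [← hpair]; right; rfl
    rcases this with h | h <;> rw [h] at hwm <;> [rw [hvp] at hwm; rw [hvm] at hwm] <;> linarith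
  · -- s₁ = -1, s₂ = 1 : ‖w + allOne‖ ≤ 1, ‖v ± allOne‖ = 2
    have hvp : ‖v + allOne‖ = 2 := by
      refine norm_eq_two _ δ (by rw [addOne_coord, vδ, h2]; norm_num) ?_
      refine forall_bound _ γ δ 2 (by rw [addOne_coord, vγ, h1]; norm_num)
        (by rw [addOne_coord, vδ, h2]; norm_num) ?_
      intro β hβ1 hβ2
      rw [addOne_coord, vother β hβ1 hβ2]; norm_num
    have hvm : ‖v - allOne‖ = 2 := by
      refine norm_eq_two _ γ (by rw [subOne_coord, vγ, h1]; norm_num) ?_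
      refine forall_bound _ γ δ 2 (by rw [subOne_coord, vγ, h1]; norm_num)
        (by rw [subOne_coord, vδ, h2]; norm_num) ?_
      intro β hβ1 hβ2
      rw [subOne_coord, vother β hβ1 hβ2]; norm_num
    have hwp : ‖w + allOne‖ ≤ 1 := by
      refine norm_le' zero_le_one _ ?_
      refine forall_bound _ γ δ 1 (by rw [addOne_coord, wγ, h1]; norm_num)
        (by rw [addOne_coord, wδ, h2]; norm_num) ?_
      intro β hβ1 hβ2
      rw [addOne_coord, wother β hβ1 hβ2]; norm_num
    rcases hmem3 with h | h <;> rw [h] at hwp <;> [rw [hvp] at hwp; rw [hvm] at hwp] <;> linarith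
  · -- s₁ = -1, s₂ = -1 : ‖v + allOne‖ ≤ 1, ‖w ± allOne‖ = 2
    have hwp : ‖w + allOne‖ = 2 := by
      refine norm_eq_two _ δ (by rw [addOne_coord, wδ, h2]; norm_num) ?_
      refine forall_bound _ γ δ 2 (by rw [addOne_coord, wγ, h1]; norm_num)
        (by rw [addOne_coord, wδ, h2]; norm_num) ?_
      intro β hβ1 hβ2
      rw [addOne_coord, wother β hβ1 hβ2]; norm_num
    have hwm : ‖w - allOne‖ = 2 := by
      refine norm_eq_two _ γ (by rw [subOne_coord, wγ, h1]; norm_num) ?_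
      refine forall_bound _ γ δ 2 (by rw [subOne_coord, wγ, h1]; norm_num)
        (by rw [subOne_coord, wδ, h2]; norm_num) ?_
      intro β hβ1 hβ2
      rw [subOne_coord, wother β hβ1 hβ2]; norm_num
    have hvp : ‖v + allOne‖ ≤ 1 := by
      refine norm_le' zero_le_one _ ?_
      refine forall_bound _ γ δ 1 (by rw [addOne_coord, vγ, h1]; norm_num)
        (by rw [addOne_coord, vδ, h2]; norm_num) ?_
      intro β hβ1 hβ2
      rw [addOne_coord, vother β hβ1 hβ2]; norm_num
    rcases hmem1 with h | h <;> rw [h] at hvp <;> [rw [hwp] at hvp; rw [hwm] at hvp] <;> linarith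


include Pabs Ppair in
lemma coherent (Pone : P allOne = allOne) (x : X) :
    (∀ γ, P x γ = x γ) ∨ (∀ γ, P x γ = - x γ) := by
  by_contra hc
  push_neg at hc
  obtain ⟨⟨δ, hδne⟩, ⟨γ, hγne⟩⟩ := hc
  have hPγ : P x γ = x γ := (abs_eq_abs.mp (Pabs x γ)).resolve_right hγne
  have hPδ : P x δ = - x δ := (abs_eq_abs.mp (Pabs x δ)).resolve_left hδne
  have hxγ : x γ ≠ 0 := by
    intro h; apply hγne; rw [hPγ, h, neg_zero]
  have hxδ : x δ ≠ 0 := by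
    intro h; apply hδne; rw [hPδ, h, neg_zero]
  have hne : γ ≠ δ := by
    intro h; subst h
    apply hxγ
    have h1 := hPγ.symm.trans hPδ
    linarith
  set s₁ : ℝ := if 0 < x γ then 1 else -1 with hs₁def
  set s₂ : ℝ := if 0 < x δ then 1 else -1 with hs₂def
  have hs₁ : s₁ = 1 ∨ s₁ = -1 := by rw [hs₁def]; split <;> simp
  have hs₂ : s₂ = 1 ∨ s₂ = -1 := by rw [hs₂def]; split <;> simp
  set v : X := lp.single ⊤ γ s₁ + lp.single ⊤ δ s₂ with hv
  have vcoord : ∀ β, v β = (if β = γ then s₁ else 0) + (if β = δ then s₂ else 0) := by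
    intro β
    have := congr_fun (lp.coeFn_add (lp.single ⊤ γ s₁ : X) (lp.single ⊤ δ s₂ : X)) β
    simp only [Pi.add_apply] at this
    rw [hv, this, single_coord, single_coord]
  have vγ : v γ = s₁ := by rw [vcoord]; simp [hne]
  have vδ : v δ = s₂ := by rw [vcoord]; simp [Ne.symm hne]
  set w : X := v - x with hwdef
  have wγ : w γ = s₁ - x γ := by
    rw [hwdef, congr_fun (lp.coeFn_sub v x) γ]; simp [vγ]
  have wδ : w δ = s₂ - x δ := by
    rw [hwdef, congr_fun (lp.coeFn_sub v x) δ]; simp [vδ]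
  set m : ℝ := min (min |x γ| 1) (min |x δ| 1) with hm
  have hm0 : 0 < m :=
    lt_min (lt_min (abs_pos.mpr hxγ) one_pos) (lt_min (abs_pos.mpr hxδ) one_pos)
  obtain ⟨N, hN⟩ := exists_nat_gt (‖w‖ / (2 * m))
  have hN0 : 0 < (N:ℝ) := lt_of_le_of_lt (div_nonneg (norm_nonneg w) (by linarith)) hN
  set z : ℕ → X := fun k => x + ((k:ℝ)/(N:ℝ)) • w with hzdef
  have zc : ∀ (k:ℕ) (β : Γ), z k β = x β + ((k:ℝ)/(N:ℝ)) * (w β) := by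
    intro k β
    have h1 := congr_fun (lp.coeFn_add x (((k:ℝ)/(N:ℝ)) • w)) β
    simp only [Pi.add_apply] at h1
    have h2 := congr_fun (lp.coeFn_smul ((k:ℝ)/(N:ℝ)) w) β
    simp only [Pi.smul_apply, smul_eq_mul] at h2
    show (x + ((k:ℝ)/(N:ℝ)) • w : X) β = _
    rw [h1, h2]
  have hdist : ∀ k : ℕ, ‖z k - z (k+1)‖ = ‖w‖ / (N:ℝ) := by
    intro k
    have h1 : z k - z (k+1) = (((k:ℝ)/(N:ℝ)) - (((k+1:ℕ):ℝ)/(N:ℝ))) • w := by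
      show (x + _) - (x + _) = _
      rw [add_sub_add_left_eq_sub, ← sub_smul]
    rw [h1, norm_smul, Real.norm_eq_abs]
    have h3 : ((k:ℝ)/(N:ℝ)) - (((k+1:ℕ):ℝ)/(N:ℝ)) = -(1/(N:ℝ)) := by
      push_cast
      field_simp
      ring
    rw [h3, abs_neg, abs_of_nonneg (by positivity)]
    ring
  have hdistlt : ‖w‖ / (N:ℝ) < 2 * m := by
    rw [div_lt_iff₀ hN0]
    rw [div_lt_iff₀ (by linarith : (0:ℝ) < 2 * m)] at hN
    linarith
  have hQ : ∀ k : ℕ, k ≤ N →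
      ((P (z k) γ = z k γ ∧ P (z k) δ = - z k δ) ∨
       (P (z k) γ = - z k γ ∧ P (z k) δ = z k δ)) := by
    intro k
    induction k with
    | zero =>
      intro _
      have hz0 : z 0 = x := by
        show x + (((0:ℕ):ℝ)/(N:ℝ)) • w = x
        norm_num
      rw [hz0]
      exact Or.inl ⟨hPγ, hPδ⟩
    | succ n ih =>
      intro hn
      have hn' : n ≤ N := by omega
      have ht0 : (0:ℝ) ≤ (n:ℝ)/(N:ℝ) := by positivity
      have ht1 : (n:ℝ)/(N:ℝ) ≤ 1 := by
        rw [div_le_one hN0]; exact_mod_cast hn'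
      have hu0 : (0:ℝ) ≤ ((n+1:ℕ):ℝ)/(N:ℝ) := by positivity
      have hu1 : ((n+1:ℕ):ℝ)/(N:ℝ) ≤ 1 := by
        rw [div_le_one hN0]; exact_mod_cast hn
      have hgγ : ‖z n - z (n+1)‖ < |z n γ + z (n+1) γ| := by
        rw [hdist, zc, zc, wγ]
        calc ‖w‖/(N:ℝ) < 2*m := hdistlt
        _ ≤ 2 * min |x γ| 1 := by
            have := min_le_left (min |x γ| 1) (min |x δ| 1)
            linarith
        _ ≤ _ := seg hxγ hs₁def ht0 ht1 hu0 hu1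
      have hgδ : ‖z n - z (n+1)‖ < |z n δ + z (n+1) δ| := by
        rw [hdist, zc, zc, wδ]
        calc ‖w‖/(N:ℝ) < 2*m := hdistlt
        _ ≤ 2 * min |x δ| 1 := by
            have := min_le_right (min |x γ| 1) (min |x δ| 1)
            linarith
        _ ≤ _ := seg hxδ hs₂def ht0 ht1 hu0 hu1
      rcases ih hn' with ⟨q1, q2⟩ | ⟨q1, q2⟩
      · exact step P Pabs Ppair (z n) (z (n+1)) γ δ q1 q2 hgγ hgδ
      · rcases step P Pabs Ppair (z n) (z (n+1)) δ γ q2 q1 hgδ hgγ with ⟨r1, r2⟩ | ⟨r1, r2⟩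
        · exact Or.inr ⟨r2, r1⟩
        · exact Or.inl ⟨r2, r1⟩
  have hzN : z N = v := by
    show x + (((N:ℕ):ℝ)/(N:ℝ)) • w = v
    rw [div_self (ne_of_gt hN0), one_smul, hwdef]
    abel
  have hfin := hQ N (le_refl N)
  rw [hzN] at hfin
  rcases hfin with ⟨q1, q2⟩ | ⟨q1, q2⟩
  · exact final P Pabs Ppair Pone γ δ hne s₁ s₂ hs₁ hs₂ (by rw [← hv]; exact q1)
      (by rw [← hv]; exact q2)
  · have hcomm : (lp.single ⊤ δ s₂ + lp.single ⊤ γ s₁ : X) = v := by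
      rw [hv]; exact add_comm _ _
    apply final P Pabs Ppair Pone δ γ (Ne.symm hne) s₂ s₁ hs₂ hs₁
    · rw [hcomm]; exact q2
    · rw [hcomm]; exact q1

end Coherence

end Stmt15

set_option synthInstance.maxHeartbeats 1000000 in
set_option maxHeartbeats 1000000 in
open Filter in
theorem stmt_15 {Γ : Type*} {Y : Type*} [NormedAddCommGroup Y] [NormedSpace ℝ Y]
    (f : lp (fun _ : Γ => ℝ) ⊤ → Y)
    (hf : ∀ x y : lp (fun _ : Γ => ℝ) ⊤,
      ({‖f x + f y‖, ‖f x - f y‖} : Set ℝ) = {‖x + y‖, ‖x - y‖})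
    (hsurj : Function.Surjective f) :
    ∃ ε : lp (fun _ : Γ => ℝ) ⊤ → ℝ, (∀ x, ε x = 1 ∨ ε x = -1) ∧
      ∃ g : lp (fun _ : Γ => ℝ) ⊤ →ₗᵢ[ℝ] Y, Function.Surjective g ∧
        ∀ x, g x = ε x • f x := by
  classical
  haveI : DecidableEq Γ := Classical.decEq Γ
  -- f preserves norms
  have normf : ∀ x, ‖f x‖ = ‖x‖ := by
    intro x
    have h := hf x x
    rw [Set.pair_eq_pair_iff] at h
    have e1 : ‖f x - f x‖ = 0 := by simp
    have e2 : ‖x - x‖ = 0 := by simp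
    have e3 : ‖f x + f x‖ = 2 * ‖f x‖ := by
      rw [show f x + f x = (2:ℝ) • f x from (two_smul ℝ (f x)).symm, norm_smul]
      simp
    have e4 : ‖x + x‖ = 2 * ‖x‖ := by
      rw [show x + x = (2:ℝ) • x from (two_smul ℝ x).symm, norm_smul]
      simp
    rcases h with ⟨h1, _⟩ | ⟨h1, h2⟩
    · rw [e3, e4] at h1; linarith
    · rw [e3, e2] at h1
      rw [e1, e4] at h2
      linarith
  rcases isEmpty_or_nonempty Γ with hΓ | hΓ
  · -- trivial case : Γ empty
    have hx0 : ∀ x : lp (fun _ : Γ => ℝ) ⊤, x = 0 := by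
      intro x
      apply lp.ext
      funext γ
      exact isEmptyElim γ
    have hf0 : ∀ x, f x = 0 := by
      intro x
      have : ‖f x‖ = 0 := by rw [normf, hx0 x, norm_zero]
      exact norm_eq_zero.mp this
    refine ⟨fun _ => 1, fun _ => Or.inl rfl, ⟨(0 : lp (fun _ : Γ => ℝ) ⊤ →ₗ[ℝ] Y), ?_⟩, ?_, ?_⟩
    · intro x
      show ‖(0 : Y)‖ = ‖x‖
      rw [hx0 x, norm_zero, norm_zero]
    · intro v
      obtain ⟨x, rfl⟩ := hsurj v
      exact ⟨0, by rw [hf0 x]; simp⟩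
    · intro x
      show (0 : Y) = (1:ℝ) • f x
      rw [hf0 x, smul_zero]
  · haveI := hΓ
    -- dual functionals on images of large single vectors
    have hsingle_ne : ∀ (γ : Γ) (n : ℕ), f (lp.single ⊤ γ ((n:ℝ)+1)) ≠ 0 := by
      intro γ n h
      have h2 := normf (lp.single ⊤ γ ((n:ℝ)+1))
      rw [h, norm_zero, Stmt15.norm_single] at h2
      have : |(n:ℝ)+1| > 0 := by positivity
      linarith
    have hψex : ∀ (γ : Γ) (n : ℕ), ∃ ψ : Y →L[ℝ] ℝ, ‖ψ‖ = 1 ∧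
        ψ (f (lp.single ⊤ γ ((n:ℝ)+1))) = (n:ℝ)+1 := by
      intro γ n
      obtain ⟨g, hg1, hg2⟩ := exists_dual_vector ℝ _ (norm_ne_zero_iff.mpr (hsingle_ne γ n))
      refine ⟨g, hg1, ?_⟩
      have hg2' : g (f (lp.single ⊤ γ ((n:ℝ)+1))) = ‖f (lp.single ⊤ γ ((n:ℝ)+1))‖ := by
        exact_mod_cast hg2
      rw [hg2', normf, Stmt15.norm_single, abs_of_pos (by positivity)]
    choose ψ hψ1 hψ2 using hψex
    -- evaluation of the functionals
    have heval : ∀ (γ : Γ) (n : ℕ) (x : lp (fun _ : Γ => ℝ) ⊤), 2 * ‖x‖ ≤ (n:ℝ)+1 →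
        ψ γ n (f x) = x γ ∨ ψ γ n (f x) = - x γ := by
      intro γ n x hn
      have hp := hf x (lp.single ⊤ γ ((n:ℝ)+1))
      rw [Stmt15.norm_add_single x γ hn, Stmt15.norm_sub_single x γ hn,
        Set.pair_eq_pair_iff] at hp
      have hub : ψ γ n (f x) ≤ ‖f x + f (lp.single ⊤ γ ((n:ℝ)+1))‖ - ((n:ℝ)+1) := by
        have h1 : ψ γ n (f x + f (lp.single ⊤ γ ((n:ℝ)+1))) ≤
            ‖f x + f (lp.single ⊤ γ ((n:ℝ)+1))‖ := by
          have h2 := (ψ γ n).le_opNorm (f x + f (lp.single ⊤ γ ((n:ℝ)+1)))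
          rw [hψ1 γ n, one_mul, Real.norm_eq_abs] at h2
          linarith [(abs_le.mp h2).2]
        rw [map_add, hψ2 γ n] at h1
        linarith
      have hlb : ((n:ℝ)+1) - ‖f x - f (lp.single ⊤ γ ((n:ℝ)+1))‖ ≤ ψ γ n (f x) := by
        have h1 : - ψ γ n (f x - f (lp.single ⊤ γ ((n:ℝ)+1))) ≤
            ‖f x - f (lp.single ⊤ γ ((n:ℝ)+1))‖ := by
          have h2 := (ψ γ n).le_opNorm (f x - f (lp.single ⊤ γ ((n:ℝ)+1)))
          rw [hψ1 γ n, one_mul, Real.norm_eq_abs] at h2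
          linarith [(abs_le.mp h2).1]
        rw [map_sub, hψ2 γ n] at h1
        linarith
      rcases hp with ⟨h1, h2⟩ | ⟨h1, h2⟩
      · left; rw [h1] at hub; rw [h2] at hlb; linarith
      · right; rw [h1] at hub; rw [h2] at hlb; linarith
    -- ultrafilter limits
    set U : Ultrafilter ℕ := Ultrafilter.of atTop with hU
    have hUatTop : ∀ s : Set ℕ, s ∈ (atTop : Filter ℕ) → s ∈ U := by
      intro s hs
      exact (Ultrafilter.of_le atTop) hs
    have hlim : ∀ (γ : Γ) (v : Y), ∃ c : ℝ, |c| ≤ ‖v‖ ∧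
        Tendsto (fun n => ψ γ n v) (U : Filter ℕ) (nhds c) := by
      intro γ v
      have hbd : ∀ n : ℕ, ψ γ n v ∈ Set.Icc (-‖v‖) ‖v‖ := by
        intro n
        have h2 := (ψ γ n).le_opNorm v
        rw [hψ1 γ n, one_mul, Real.norm_eq_abs] at h2
        exact ⟨(abs_le.mp h2).1, (abs_le.mp h2).2⟩
      obtain ⟨c, hcmem, hcle⟩ := (isCompact_Icc (a := -‖v‖) (b := ‖v‖)).ultrafilter_le_nhds
        (U.map fun n => ψ γ n v)
        (Filter.le_principal_iff.mpr (Ultrafilter.mem_map.mpr (Filter.univ_mem' hbd)))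
      refine ⟨c, abs_le.mpr ⟨hcmem.1, hcmem.2⟩, ?_⟩
      rwa [Ultrafilter.coe_map] at hcle
    choose φ hφbd hφtend using hlim
    have hφadd : ∀ (γ : Γ) (v w : Y), φ γ (v + w) = φ γ v + φ γ w := by
      intro γ v w
      refine tendsto_nhds_unique (hφtend γ (v + w)) ?_
      have h1 := (hφtend γ v).add (hφtend γ w)
      refine h1.congr (fun n => ?_)
      rw [← map_add]
    have hφsmul : ∀ (γ : Γ) (c : ℝ) (v : Y), φ γ (c • v) = c * φ γ v := by
      intro γ c v
      refine tendsto_nhds_unique (hφtend γ (c • v)) ?_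
      have h1 := (hφtend γ v).const_mul c
      refine h1.congr (fun n => ?_)
      rw [map_smul, smul_eq_mul]
    have hφeval : ∀ (γ : Γ) (x : lp (fun _ : Γ => ℝ) ⊤),
        φ γ (f x) = x γ ∨ φ γ (f x) = - x γ := by
      intro γ x
      have hev : {n : ℕ | 2 * ‖x‖ ≤ (n:ℝ)+1} ∈ U := by
        apply hUatTop
        rw [Filter.mem_atTop_sets]
        refine ⟨⌈2 * ‖x‖⌉₊, fun n hn => ?_⟩
        have : (2 * ‖x‖) ≤ (⌈2 * ‖x‖⌉₊ : ℝ) := Nat.le_ceil _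
        have h2 : ((⌈2 * ‖x‖⌉₊ : ℕ) : ℝ) ≤ (n : ℝ) := by exact_mod_cast hn
        simp only [Set.mem_setOf_eq]
        linarith
      by_cases hS : {n : ℕ | ψ γ n (f x) = x γ} ∈ U
      · left
        refine tendsto_nhds_unique (hφtend γ (f x)) ?_
        refine Tendsto.congr' ?_ tendsto_const_nhds
        exact Filter.eventually_of_mem hS (fun n hn => hn.symm)
      · right
        have hcompl : {n : ℕ | ψ γ n (f x) = x γ}ᶜ ∈ U :=
          Ultrafilter.compl_mem_iff_notMem.mpr hS
        have hS2 : {n : ℕ | ψ γ n (f x) = - x γ} ∈ U := by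
          have h3 : {n : ℕ | ψ γ n (f x) = x γ}ᶜ ∩ {n : ℕ | 2 * ‖x‖ ≤ (n:ℝ)+1} ⊆
              {n : ℕ | ψ γ n (f x) = - x γ} := by
            rintro n ⟨hn1, hn2⟩
            exact (heval γ n x hn2).resolve_left hn1
          exact Filter.mem_of_superset (Filter.inter_mem hcompl hev) h3
        refine tendsto_nhds_unique (hφtend γ (f x)) ?_
        refine Tendsto.congr' ?_ tendsto_const_nhds
        exact Filter.eventually_of_mem hS2 (fun n hn => hn.symm)
    -- normalization
    set τ : Γ → ℝ := fun γ => φ γ (f Stmt15.allOne) with hτdef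
    have hτpm : ∀ γ, τ γ = 1 ∨ τ γ = -1 := by
      intro γ
      have := hφeval γ Stmt15.allOne
      rwa [Stmt15.allOne_apply] at this
    have hτsq : ∀ γ, τ γ * τ γ = 1 := by
      intro γ
      rcases hτpm γ with h | h <;> rw [h] <;> norm_num
    have hτabs : ∀ γ, |τ γ| = 1 := by
      intro γ
      rcases hτpm γ with h | h <;> rw [h] <;> norm_num
    -- the coordinate embedding T
    have hTmem : ∀ v : Y, Memℓp (fun γ => τ γ * φ γ v) ⊤ := by
      intro v
      apply memℓp_infty
      refine ⟨‖v‖, ?_⟩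
      rintro r ⟨γ, rfl⟩
      show ‖τ γ * φ γ v‖ ≤ ‖v‖
      rw [Real.norm_eq_abs, abs_mul, hτabs γ, one_mul]
      exact hφbd γ v
    set T : Y → lp (fun _ : Γ => ℝ) ⊤ := fun v => ⟨fun γ => τ γ * φ γ v, hTmem v⟩ with hTdef
    have Tcoord : ∀ (v : Y) (γ : Γ), (T v) γ = τ γ * φ γ v := fun _ _ => rfl
    have Tadd : ∀ v w : Y, T (v + w) = T v + T w := by
      intro v w
      apply lp.ext
      rw [lp.coeFn_add]
      funext β
      show τ β * φ β (v + w) = (T v) β + (T w) β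
      rw [Tcoord, Tcoord, hφadd]
      ring
    have hφsub : ∀ (γ : Γ) (v w : Y), φ γ (v - w) = φ γ v - φ γ w := by
      intro γ v w
      rw [sub_eq_add_neg, hφadd, show -w = (-1:ℝ) • w from (neg_one_smul ℝ w).symm, hφsmul]
      ring
    have Tsub : ∀ v w : Y, T (v - w) = T v - T w := by
      intro v w
      apply lp.ext
      rw [lp.coeFn_sub]
      funext β
      show τ β * φ β (v - w) = (T v) β - (T w) β
      rw [Tcoord, Tcoord, hφsub]
      ring
    have Tsmul : ∀ (c : ℝ) (v : Y), T (c • v) = c • T v := by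
      intro c v
      apply lp.ext
      rw [lp.coeFn_smul]
      funext β
      show τ β * φ β (c • v) = (c • ⇑(T v)) β
      rw [Pi.smul_apply, smul_eq_mul, Tcoord, hφsmul]
      ring
    -- the composed phase isometry with coordinates
    set Pm : lp (fun _ : Γ => ℝ) ⊤ → lp (fun _ : Γ => ℝ) ⊤ := fun x => T (f x) with hPmdef
    have Pmabs : ∀ (x : lp (fun _ : Γ => ℝ) ⊤) (γ : Γ), |Pm x γ| = |x γ| := by
      intro x γ
      have h1 : Pm x γ = τ γ * φ γ (f x) := rfl
      rcases hφeval γ x with h | h <;>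
        rw [h1, h, abs_mul, hτabs γ, one_mul] <;> simp
    have Tnormx : ∀ x : lp (fun _ : Γ => ℝ) ⊤, ‖T (f x)‖ = ‖x‖ := by
      intro x
      refine le_antisymm (Stmt15.norm_le' (norm_nonneg x) _ (fun γ => ?_)) ?_
      · have := Pmabs x γ
        rw [hPmdef] at this
        rw [this]
        exact Stmt15.coord_abs_le x γ
      · refine Stmt15.norm_le' (norm_nonneg _) _ (fun γ => ?_)
        have h2 := Pmabs x γ
        rw [← h2]
        exact Stmt15.coord_abs_le (T (f x)) γ
    have Tnorm : ∀ v : Y, ‖T v‖ = ‖v‖ := by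
      intro v
      obtain ⟨x, rfl⟩ := hsurj v
      rw [Tnormx, normf]
    have Pmpair : ∀ x y : lp (fun _ : Γ => ℝ) ⊤,
        ({‖Pm x + Pm y‖, ‖Pm x - Pm y‖} : Set ℝ) = {‖x + y‖, ‖x - y‖} := by
      intro x y
      rw [hPmdef]
      show ({‖T (f x) + T (f y)‖, ‖T (f x) - T (f y)‖} : Set ℝ) = _
      rw [← Tadd, ← Tsub, Tnorm, Tnorm]
      exact hf x y
    have Pmone : Pm Stmt15.allOne = Stmt15.allOne := by
      apply lp.ext
      funext β
      show τ β * φ β (f Stmt15.allOne) = (Stmt15.allOne : lp (fun _ : Γ => ℝ) ⊤) β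
      rw [Stmt15.allOne_apply]
      exact hτsq β
    have coh := Stmt15.coherent Pm Pmabs Pmpair Pmone
    -- define the sign function and conclude
    set ε : lp (fun _ : Γ => ℝ) ⊤ → ℝ :=
      fun x => if ∀ γ, Pm x γ = x γ then 1 else -1 with hεdef
    have hε : ∀ x, ε x = 1 ∨ ε x = -1 := by
      intro x
      by_cases h : ∀ γ, Pm x γ = x γ
      · left; rw [hεdef]; exact if_pos h
      · right; rw [hεdef]; exact if_neg h
    have hkey : ∀ x, T (ε x • f x) = x := by
      intro x
      rw [Tsmul]
      by_cases h : ∀ γ, Pm x γ = x γ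
      · have hε1 : ε x = 1 := by rw [hεdef]; exact if_pos h
        rw [hε1, one_smul]
        apply lp.ext
        funext β
        exact h β
      · have hε1 : ε x = -1 := by rw [hεdef]; exact if_neg h
        have h2 : ∀ γ, Pm x γ = - x γ := (coh x).resolve_left h
        rw [hε1]
        apply lp.ext
        rw [lp.coeFn_smul]
        funext β
        rw [Pi.smul_apply, smul_eq_mul]
        show (-1 : ℝ) * (Pm x) β = x β
        rw [h2 β]
        ring
    have Tinj : ∀ v w : Y, T v = T w → v = w := by
      intro v w h
      have h1 : ‖v - w‖ = 0 := by
        rw [← Tnorm, Tsub, h, sub_self, norm_zero]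
      rw [norm_eq_zero, sub_eq_zero] at h1
      exact h1
    have gadd : ∀ x y, ε (x + y) • f (x + y) = ε x • f x + ε y • f y := by
      intro x y
      apply Tinj
      rw [Tadd, hkey, hkey, hkey]
    have gsmul : ∀ (c : ℝ) (x : lp (fun _ : Γ => ℝ) ⊤),
        ε (c • x) • f (c • x) = c • (ε x • f x) := by
      intro c x
      apply Tinj
      rw [hkey (c • x), Tsmul c (ε x • f x), hkey x]
    have gnorm : ∀ x, ‖ε x • f x‖ = ‖x‖ := by
      intro x
      rw [norm_smul, Real.norm_eq_abs, normf]
      rcases hε x with h | h <;> rw [h] <;> norm_num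
    refine ⟨ε, hε, ⟨⟨⟨⟨fun x => ε x • f x, gadd⟩, fun c x => gsmul c x⟩, gnorm⟩, ?_, fun x => rfl⟩⟩
    intro v
    obtain ⟨x, rfl⟩ := hsurj v
    refine ⟨ε x • x, ?_⟩
    show ε (ε x • x) • f (ε x • x) = f x
    have h1 : ε x * ε x = 1 := by rcases hε x with h | h <;> rw [h] <;> norm_num
    rw [gsmul (ε x) x, smul_smul, h1, one_smul]
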